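/- Let F : ℝᵈ → ℝ be convex, differentiable, and L-smooth, and suppose F = (1/n)∑ f_i where each f_i is convex and L-smooth with common minimizer x* (i.e., ∇F(x*) = 0 and ‖∇f_i(x)‖ ≤ L‖x - x*‖). Fix x with ‖x - x*‖ ≤ R_x and y = x + √(2h)ξ where ‖ξ‖ ≤ C_ξ√d and |⟨∇f_i(x), ξ⟩| ≤ C_x‖∇f_i(x)‖ for all i. Then -√(2h)·C_x·L·R_x - h·L·C_ξ²·d ≤ F(x) - F(y) ≤ √(2h)·C_x·L·R_x, and consequently if h ≤ 1/(98 C_x² L² R_x² + 7 L C_ξ² d) then 3/4 ≤ √(exp(F(x) - F(y))) ≤ 4/3. -/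

import Mathlib

open scoped RealInnerProductSpace

set_option maxHeartbeats 1000000

theorem stmt10 {d n : ℕ} (f : Fin n → EuclideanSpace ℝ (Fin d) → ℝ)
    (F : EuclideanSpace ℝ (Fin d) → ℝ)
    (L h Rx Cxi Cx : ℝ) (hL : 0 < L) (hh : 0 < h) (hRx : 0 < Rx)
    (hCxi : 0 < Cxi) (hCx : 0 < Cx)
    (hdiff : ∀ i, Differentiable ℝ (f i))
    (hF : ∀ z, F z = (1 / (n : ℝ)) * ∑ i, f i z)
    (hconv : ∀ i z w, f i z + ⟪gradient (f i) z, w - z⟫ ≤ f i w)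
    (hsm : ∀ i z w, f i w ≤ f i z + ⟪gradient (f i) z, w - z⟫ + L / 2 * ‖w - z‖ ^ 2)
    (xstar : EuclideanSpace ℝ (Fin d))
    (hgradF : gradient F xstar = 0)
    (hgradbound : ∀ i z, ‖gradient (f i) z‖ ≤ L * ‖z - xstar‖)
    (x ξ : EuclideanSpace ℝ (Fin d))
    (hx : ‖x - xstar‖ ≤ Rx)
    (hξ : ‖ξ‖ ≤ Cxi * Real.sqrt d)
    (hinner : ∀ i, |⟪gradient (f i) x, ξ⟫| ≤ Cx * ‖gradient (f i) x‖)
    (y : EuclideanSpace ℝ (Fin d)) (hy : y = x + Real.sqrt (2 * h) • ξ) :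
    (-(Real.sqrt (2 * h) * Cx * L * Rx) - h * L * Cxi ^ 2 * d ≤ F x - F y ∧
      F x - F y ≤ Real.sqrt (2 * h) * Cx * L * Rx) ∧
    (h ≤ 1 / (98 * Cx ^ 2 * L ^ 2 * Rx ^ 2 + 7 * L * Cxi ^ 2 * d) →
      (3 : ℝ) / 4 ≤ Real.sqrt (Real.exp (F x - F y)) ∧
        Real.sqrt (Real.exp (F x - F y)) ≤ (4 : ℝ) / 3) := by
  have hd0 : (0:ℝ) ≤ (d:ℝ) := Nat.cast_nonneg d
  have hyx : y - x = Real.sqrt (2 * h) • ξ := by rw [hy]; abel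
  have hs0 : (0:ℝ) ≤ Real.sqrt (2 * h) := Real.sqrt_nonneg _
  have hs2 : Real.sqrt (2 * h) ^ 2 = 2 * h := Real.sq_sqrt (by positivity)
  set s := Real.sqrt (2 * h) with hsdef
  set a := Cx * (L * Rx) with hadef
  have ha0 : 0 < a := by positivity
  set b := h * (L * (Cxi ^ 2 * (d:ℝ))) with hbdef
  have hb0 : 0 ≤ b := by positivity
  -- inner product bound per i
  have hinner2 : ∀ i, |⟪gradient (f i) x, y - x⟫| ≤ s * a := by
    intro i
    rw [hyx, real_inner_smul_right, abs_mul, abs_of_nonneg hs0]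
    have h1 : ‖gradient (f i) x‖ ≤ L * Rx := by
      calc ‖gradient (f i) x‖ ≤ L * ‖x - xstar‖ := hgradbound i x
        _ ≤ L * Rx := by nlinarith
    have h2 : |⟪gradient (f i) x, ξ⟫| ≤ a := by
      calc |⟪gradient (f i) x, ξ⟫| ≤ Cx * ‖gradient (f i) x‖ := hinner i
        _ ≤ a := by rw [hadef]; nlinarith
    exact mul_le_mul_of_nonneg_left h2 hs0
  -- norm squared bound
  have hnorm2 : L / 2 * ‖y - x‖ ^ 2 ≤ b := by
    have hn1 : ‖y - x‖ ^ 2 = 2 * h * ‖ξ‖ ^ 2 := by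
      rw [hyx, norm_smul, mul_pow, Real.norm_eq_abs, sq_abs, hs2]
    have hn2 : ‖ξ‖ ^ 2 ≤ Cxi ^ 2 * (d:ℝ) := by
      have := Real.sq_sqrt hd0
      nlinarith [norm_nonneg ξ, Real.sqrt_nonneg (d:ℝ)]
    rw [hn1, hbdef]
    nlinarith [mul_le_mul_of_nonneg_left hn2 (mul_nonneg hh.le hL.le)]
  -- per-i bounds on f i x - f i y
  have hup_i : ∀ i : Fin n, f i x - f i y ≤ s * a := by
    intro i
    have h1 := hconv i x y
    have h3 := neg_abs_le ⟪gradient (f i) x, y - x⟫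
    have h2 := hinner2 i
    linarith
  have hlow_i : ∀ i : Fin n, -(s * a) - b ≤ f i x - f i y := by
    intro i
    have h1 := hsm i x y
    have h3 := le_abs_self ⟪gradient (f i) x, y - x⟫
    have h2 := hinner2 i
    linarith
  have hFdiff : F x - F y = (1 / (n:ℝ)) * ∑ i, (f i x - f i y) := by
    rw [hF x, hF y, ← mul_sub, ← Finset.sum_sub_distrib]
  have hmain : -(s * a) - b ≤ F x - F y ∧ F x - F y ≤ s * a := by
    rcases Nat.eq_zero_or_pos n with hn | hn
    · have hz : F x - F y = 0 := by
        subst hn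
        rw [hFdiff]
        simp
      rw [hz]
      constructor
      · linarith [mul_nonneg hs0 ha0.le]
      · linarith [mul_nonneg hs0 ha0.le]
    · have hn' : (0:ℝ) < (n:ℝ) := by exact_mod_cast hn
      have hsum_up : ∑ i, (f i x - f i y) ≤ (n:ℝ) * (s * a) := by
        calc ∑ i, (f i x - f i y) ≤ ∑ _i : Fin n, s * a :=
              Finset.sum_le_sum (fun i _ => hup_i i)
          _ = (n:ℝ) * (s * a) := by
              simp [Finset.sum_const, Finset.card_univ, nsmul_eq_mul]
      have hsum_low : (n:ℝ) * (-(s * a) - b) ≤ ∑ i, (f i x - f i y) := by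
        calc (n:ℝ) * (-(s * a) - b) = ∑ _i : Fin n, (-(s * a) - b) := by
              simp [Finset.sum_const, Finset.card_univ, nsmul_eq_mul]
              ring
          _ ≤ ∑ i, (f i x - f i y) := Finset.sum_le_sum (fun i _ => hlow_i i)
      rw [hFdiff]
      have hinv : (0:ℝ) < 1 / (n:ℝ) := by positivity
      constructor
      · have := mul_le_mul_of_nonneg_left hsum_low hinv.le
        have heq : (1 / (n:ℝ)) * ((n:ℝ) * (-(s * a) - b)) = -(s * a) - b := by
          field_simp
        linarith [heq ▸ this]
      · have := mul_le_mul_of_nonneg_left hsum_up hinv.le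
        have heq : (1 / (n:ℝ)) * ((n:ℝ) * (s * a)) = s * a := by
          field_simp
        linarith [heq ▸ this]
  obtain ⟨hlow, hup⟩ := hmain
  have hform1 : s * Cx * L * Rx = s * a := by rw [hadef]; ring
  have hform2 : h * L * Cxi ^ 2 * (d:ℝ) = b := by rw [hbdef]; ring
  refine ⟨⟨by rw [hform1, hform2]; linarith, by rw [hform1]; linarith⟩, ?_⟩
  intro hsmall
  have hden : (0:ℝ) < 98 * Cx ^ 2 * L ^ 2 * Rx ^ 2 + 7 * L * Cxi ^ 2 * (d:ℝ) := by positivity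
  have hsmall1 : h * (98 * Cx ^ 2 * L ^ 2 * Rx ^ 2 + 7 * L * Cxi ^ 2 * (d:ℝ)) ≤ 1 :=
    (le_div_iff₀ hden).mp hsmall
  have ha2 : a ^ 2 = Cx ^ 2 * L ^ 2 * Rx ^ 2 := by rw [hadef]; ring
  have hhb : b ≤ 1 / 7 := by
    rw [hbdef]
    nlinarith [sq_nonneg (Cx * L * Rx), mul_nonneg hh.le (sq_nonneg (Cx * L * Rx))]
  have hsa : s * a ≤ 1 / 7 := by
    have hsq : (s * a) ^ 2 ≤ 1 / 49 := by
      have : (s * a) ^ 2 = 2 * h * a ^ 2 := by rw [mul_pow, hs2]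
      rw [this, ha2]
      nlinarith [mul_nonneg hh.le hd0, mul_nonneg (mul_nonneg hh.le hL.le)
        (mul_nonneg (sq_nonneg Cxi) hd0)]
    nlinarith [mul_nonneg hs0 ha0.le, sq_nonneg (s * a - 1 / 7)]
  set D := F x - F y with hDdef
  have hD1 : -(2 / 7 : ℝ) ≤ D := by linarith
  have hD2 : D ≤ 1 / 7 := by linarith
  have hsqrtexp : Real.sqrt (Real.exp D) = Real.exp (D / 2) := (Real.exp_half D).symm
  rw [hsqrtexp]
  have hlo : (6 / 7 : ℝ) ≤ Real.exp (D / 2) := by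
    have := Real.add_one_le_exp (D / 2)
    linarith
  have hexp17 : Real.exp (1 / 7 : ℝ) ≤ 7 / 6 := by
    have he : (6 / 7 : ℝ) ≤ Real.exp (-(1 / 7 : ℝ)) := by
      have := Real.add_one_le_exp (-(1 / 7 : ℝ))
      linarith
    have hmul : Real.exp (1 / 7 : ℝ) * Real.exp (-(1 / 7 : ℝ)) = 1 := by
      rw [← Real.exp_add]; norm_num
    nlinarith [Real.exp_pos (1 / 7 : ℝ), Real.exp_pos (-(1 / 7 : ℝ))]
  have hhi : Real.exp (D / 2) ≤ Real.exp (1 / 7 : ℝ) :=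
    Real.exp_le_exp.mpr (by linarith)
  exact ⟨by linarith, by linarith⟩
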